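/- Suppose m = m(n) is a sequence of positive integers with m(n)/(β ln n) → 1 as n → ∞, where β > 0 is a fixed constant, and let α be the unique solution in (β, ∞) of the equation α − β·ln α = β − β·ln β + 1. Then for every fixed real z > 0, the quantity z·n^z·m^z·∫_0^∞ [1 − (1 − S_m(mξ)e^{−mξ})^n]·ξ^{z−1} dξ is asymptotically equivalent to α^z·n^z·(ln n)^z as n → ∞; equivalently, z·∫_0^∞ [1 − (1 − S_m(mξ)e^{−mξ})^n]·ξ^{z−1} dξ → (α/β)^z as n → ∞. -/

import Mathlib

open MeasureTheory Filter Real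

/-- `S m y = ∑_{l=0}^{m-1} y^l / l!`, the `m`-th partial sum of the Taylor series of `e^y`. -/
noncomputable def S (m : ℕ) (y : ℝ) : ℝ := ∑ l ∈ Finset.range m, y ^ l / (Nat.factorial l)

open Set

lemma S_nonneg (m : ℕ) {y : ℝ} (hy : 0 ≤ y) : 0 ≤ S m y :=
  Finset.sum_nonneg fun l _ => div_nonneg (pow_nonneg hy l) (Nat.cast_nonneg _)

lemma S_le_exp (m : ℕ) {y : ℝ} (hy : 0 ≤ y) : S m y ≤ Real.exp y :=
  Real.sum_le_exp_of_nonneg hy m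

lemma term_le_S {m l : ℕ} (hl : l < m) {y : ℝ} (hy : 0 ≤ y) :
    y ^ l / (Nat.factorial l) ≤ S m y :=
  Finset.single_le_sum (f := fun l => y ^ l / (Nat.factorial l))
    (fun i _ => div_nonneg (pow_nonneg hy i) (Nat.cast_nonneg _)) (Finset.mem_range.2 hl)

lemma pow_le_fact_mul_exp (m : ℕ) : ((m : ℝ)) ^ m ≤ (Nat.factorial m : ℝ) * Real.exp m := by
  have h := term_le_S (m := m + 1) (l := m) (Nat.lt_succ_self m) (y := (m:ℝ)) (Nat.cast_nonneg m)
  have h2 := S_le_exp (m+1) (y := (m:ℝ)) (Nat.cast_nonneg m)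
  have hf : (0:ℝ) < (Nat.factorial m : ℝ) := by positivity
  have h3 : (m:ℝ)^m / (Nat.factorial m : ℝ) ≤ Real.exp m := h.trans h2
  rw [div_le_iff₀ hf] at h3
  linarith [h3, mul_comm (Real.exp (m:ℝ)) ((Nat.factorial m : ℝ))]

lemma fact_ub : ∀ m : ℕ, 1 ≤ m → ((Nat.factorial m : ℝ)) ≤ (m:ℝ)^(m+1) * Real.exp (1 - m) := by
  intro m hm
  induction m with
  | zero => omega
  | succ k ih =>
    rcases Nat.eq_or_lt_of_le hm with h | h
    · simp [← h]
    · have hk : 1 ≤ k := by omega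
      have ihk := ih hk
      have hkR : (1:ℝ) ≤ (k:ℝ) := by exact_mod_cast hk
      have hkpos : (0:ℝ) < k := by linarith
      have h1 : Real.exp (1/((k:ℝ)+1)) * k ≤ (k:ℝ)+1 := by
        have hineq := Real.add_one_le_exp (-(1/((k:ℝ)+1)))
        have hmul : Real.exp (1/((k:ℝ)+1)) * Real.exp (-(1/((k:ℝ)+1))) = 1 := by
          rw [← Real.exp_add]; ring_nf; exact Real.exp_zero
        have hexp := Real.exp_pos (1/((k:ℝ)+1))
        have hk1 : (0:ℝ) < (k:ℝ)+1 := by linarith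
        have hF : (k:ℝ)/((k:ℝ)+1) ≤ Real.exp (-(1/((k:ℝ)+1))) := by
          have heq : (k:ℝ)/((k:ℝ)+1) = -(1/((k:ℝ)+1)) + 1 := by field_simp; ring
          linarith [hineq]
        have h5 : Real.exp (1/((k:ℝ)+1)) * ((k:ℝ)/((k:ℝ)+1)) ≤ 1 := by
          calc Real.exp (1/((k:ℝ)+1)) * ((k:ℝ)/((k:ℝ)+1))
              ≤ Real.exp (1/((k:ℝ)+1)) * Real.exp (-(1/((k:ℝ)+1))) :=
                mul_le_mul_of_nonneg_left hF hexp.le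
            _ = 1 := hmul
        have h6 : Real.exp (1/((k:ℝ)+1)) * (k:ℝ)
            = (Real.exp (1/((k:ℝ)+1)) * ((k:ℝ)/((k:ℝ)+1))) * ((k:ℝ)+1) := by
          field_simp
        rw [h6]
        nlinarith [h5, hk1]
      have key : Real.exp 1 * (k:ℝ)^(k+1) ≤ ((k:ℝ)+1)^(k+1) := by
        have he : Real.exp 1 = Real.exp (1/((k:ℝ)+1)) ^ (k+1) := by
          rw [← Real.exp_nat_mul]
          congr 1
          push_cast
          field_simp
        rw [he, ← mul_pow]
        exact pow_le_pow_left₀ (by positivity) h1 (k+1)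
      have hfs : (Nat.factorial (k+1) : ℝ) = ((k:ℝ)+1) * (Nat.factorial k : ℝ) := by
        rw [Nat.factorial_succ]; push_cast; ring
      have hexpk : Real.exp (1 - (k:ℝ)) = Real.exp 1 * Real.exp (-(k:ℝ)) := by
        rw [← Real.exp_add]; ring_nf
      have goal_eq : ((k:ℝ)+1)^(k+1+1) * Real.exp (1 - ((k:ℝ)+1)) =
          ((k:ℝ)+1) * (((k:ℝ)+1)^(k+1) * Real.exp (-(k:ℝ))) := by
        rw [pow_succ]
        rw [show (1 - ((k:ℝ)+1)) = -(k:ℝ) by ring]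
        ring
      have cast_goal : ((k+1:ℕ):ℝ) = (k:ℝ)+1 := by push_cast; ring
      rw [hfs]
      calc ((k:ℝ)+1) * (Nat.factorial k : ℝ)
          ≤ ((k:ℝ)+1) * ((k:ℝ)^(k+1) * (Real.exp 1 * Real.exp (-(k:ℝ)))) := by
            rw [← hexpk]; exact mul_le_mul_of_nonneg_left ihk (by linarith)
        _ ≤ ((k:ℝ)+1) * (((k:ℝ)+1)^(k+1) * Real.exp (-(k:ℝ))) := by
            have : (k:ℝ)^(k+1) * (Real.exp 1 * Real.exp (-(k:ℝ)))
                = (Real.exp 1 * (k:ℝ)^(k+1)) * Real.exp (-(k:ℝ)) := by ring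
            rw [this]
            exact mul_le_mul_of_nonneg_left
              (mul_le_mul_of_nonneg_right key (Real.exp_pos _).le) (by linarith)
        _ = ((k+1:ℕ):ℝ)^(k+1+1) * Real.exp (1 - ((k+1:ℕ):ℝ)) := by
            rw [cast_goal, goal_eq]

lemma pred_fact_ub {m : ℕ} (hm : 0 < m) :
    ((Nat.factorial (m-1) : ℝ)) ≤ (m:ℝ)^m * Real.exp (1 - m) := by
  have h := fact_ub m hm
  have hfs : (m:ℝ) * (Nat.factorial (m-1) : ℝ) = (Nat.factorial m : ℝ) := by
    rw [← Nat.cast_mul, Nat.mul_factorial_pred hm.ne']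
  have hmpos : (0:ℝ) < m := by exact_mod_cast hm
  have : (m:ℝ) * (Nat.factorial (m-1) : ℝ) ≤ (m:ℝ)^(m+1) * Real.exp (1-m) := by
    rw [hfs]; exact h
  have hp : (m:ℝ)^(m+1) = (m:ℝ) * (m:ℝ)^m := by rw [pow_succ]; ring
  rw [hp] at this
  nlinarith [Real.exp_pos (1 - (m:ℝ))]


lemma hasDerivAt_S {m : ℕ} (hm : 0 < m) (x : ℝ) :
    HasDerivAt (fun y => S m y) (S m x - x^(m-1)/(Nat.factorial (m-1))) x := by
  have h : HasDerivAt (fun y => S m y)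
      (∑ l ∈ Finset.range m, (l : ℝ) * x^(l-1) / (Nat.factorial l)) x := by
    apply HasDerivAt.fun_sum
    intro l _
    simpa [mul_div_assoc] using (hasDerivAt_pow l x).div_const (Nat.factorial l : ℝ)
  convert h using 1
  obtain ⟨k, rfl⟩ : ∃ k, m = k + 1 := ⟨m - 1, (Nat.succ_pred_eq_of_pos hm).symm⟩
  rw [Finset.sum_range_succ' (fun l => (l:ℝ) * x^(l-1) / (Nat.factorial l)) k]
  simp only [Nat.cast_zero, zero_mul, zero_div, add_zero]
  have : ∀ i, ((i+1 : ℕ) : ℝ) * x ^ (i + 1 - 1) / (Nat.factorial (i+1)) = x ^ i / (Nat.factorial i) := by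
    intro i
    rw [Nat.factorial_succ]
    push_cast
    rw [mul_div_mul_left _ _ (by positivity : ((i:ℝ)+1) ≠ 0)]
  rw [Finset.sum_congr rfl (fun i _ => this i)]
  unfold S
  rw [Finset.sum_range_succ]
  simp

lemma T_antitoneOn {m : ℕ} (hm : 0 < m) :
    AntitoneOn (fun x => S m x * Real.exp (-x)) (Ici (0:ℝ)) := by
  have hderiv : ∀ x : ℝ, HasDerivAt (fun y => S m y * Real.exp (-y))
      (-(x^(m-1)/(Nat.factorial (m-1)) * Real.exp (-x))) x := by
    intro x
    have h1 := hasDerivAt_S hm x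
    have h2 : HasDerivAt (fun y : ℝ => Real.exp (-y)) (-Real.exp (-x)) x := by
      simpa [Function.comp_def] using (Real.hasDerivAt_exp (-x)).comp x (hasDerivAt_neg x)
    have := h1.fun_mul h2
    exact this.congr_deriv (by ring)
  apply antitoneOn_of_deriv_nonpos (convex_Ici 0)
  · exact Continuous.continuousOn (by
      have : Continuous (fun y => S m y) := by
        unfold S
        exact continuous_finset_sum _ fun l _ => (continuous_pow l).div_const _
      exact this.mul (Real.continuous_exp.comp continuous_neg))
  · intro x _
    exact (hderiv x).differentiableAt.differentiableWithinAt
  · intro x hx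
    rw [interior_Ici] at hx
    rw [(hderiv x).deriv]
    have hxpos : (0:ℝ) < x := hx
    have : (0:ℝ) ≤ x^(m-1)/(Nat.factorial (m-1)) * Real.exp (-x) := by positivity
    linarith


lemma geom_term (m : ℕ) {ξ : ℝ} (hξ : 1 < ξ) :
    ∀ d j : ℕ, j + d = m - 1 →
      ((m:ℝ)*ξ)^j / (Nat.factorial j) * ξ^d ≤ ((m:ℝ)*ξ)^(m-1) / (Nat.factorial (m-1)) := by
  have hξ0 : (0:ℝ) < ξ := by linarith
  intro d
  induction d with
  | zero => intro j hj; simp [← hj]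
  | succ d ih =>
    intro j hj
    have hj1 : (j+1) + d = m - 1 := by omega
    have ihj := ih (j+1) hj1
    have hjm : (j:ℝ) + 1 ≤ (m:ℝ) := by
      have : j + 1 ≤ m := by omega
      exact_mod_cast this
    have hmpos : (0:ℝ) < (m:ℝ) := by
      have : 0 < m := by omega
      exact_mod_cast this
    refine le_trans ?_ ihj
    have base_nonneg : (0:ℝ) ≤ ((m:ℝ)*ξ)^j / (Nat.factorial j) * ξ^d := by positivity
    have step : ((m:ℝ)*ξ)^j / (Nat.factorial j) * ξ^(d+1)
        = (((m:ℝ)*ξ)^j / (Nat.factorial j) * ξ^d) * ξ := by ring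
    have mid : ((m:ℝ)*ξ)^(j+1) / (Nat.factorial (j+1)) * ξ^d
        = (((m:ℝ)*ξ)^j / (Nat.factorial j) * ξ^d) * ((m:ℝ)*ξ/((j:ℝ)+1)) := by
      rw [Nat.factorial_succ, pow_succ]
      push_cast
      have h1 : (0:ℝ) < (Nat.factorial j : ℝ) := by positivity
      field_simp
    rw [step, mid]
    apply mul_le_mul_of_nonneg_left _ base_nonneg
    rw [le_div_iff₀ (by positivity : (0:ℝ) < (j:ℝ)+1)]
    nlinarith
lemma S_geom (m : ℕ) {ξ : ℝ} (hξ : 1 < ξ) :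
    S m ((m:ℝ)*ξ) ≤ ((m:ℝ)*ξ)^(m-1) / (Nat.factorial (m-1)) * (1-ξ⁻¹)⁻¹ := by
  have hξ0 : (0:ℝ) < ξ := by linarith
  have hinv : ξ⁻¹ < 1 := by rw [inv_lt_one_iff₀]; right; exact hξ
  have hinv0 : (0:ℝ) ≤ ξ⁻¹ := by positivity
  have top_nonneg : (0:ℝ) ≤ ((m:ℝ)*ξ)^(m-1) / (Nat.factorial (m-1)) := by positivity
  have hterm : ∀ l ∈ Finset.range m, ((m:ℝ)*ξ)^l / (Nat.factorial l)
      ≤ ((m:ℝ)*ξ)^(m-1) / (Nat.factorial (m-1)) * (ξ⁻¹)^(m-1-l) := by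
    intro l hl
    rw [Finset.mem_range] at hl
    have h := geom_term m hξ (m-1-l) l (by omega)
    have hpow : (0:ℝ) < ξ^(m-1-l) := by positivity
    rw [inv_pow, ← div_eq_mul_inv, le_div_iff₀ hpow]
    exact h
  calc S m ((m:ℝ)*ξ) ≤ ∑ l ∈ Finset.range m,
        ((m:ℝ)*ξ)^(m-1) / (Nat.factorial (m-1)) * (ξ⁻¹)^(m-1-l) :=
        Finset.sum_le_sum hterm
    _ = ((m:ℝ)*ξ)^(m-1) / (Nat.factorial (m-1)) * ∑ l ∈ Finset.range m, (ξ⁻¹)^(m-1-l) := by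
        rw [Finset.mul_sum]
    _ ≤ ((m:ℝ)*ξ)^(m-1) / (Nat.factorial (m-1)) * (1-ξ⁻¹)⁻¹ := by
        apply mul_le_mul_of_nonneg_left _ top_nonneg
        have hrefl : ∑ l ∈ Finset.range m, (ξ⁻¹)^(m-1-l) = ∑ l ∈ Finset.range m, (ξ⁻¹)^l :=
          Finset.sum_range_reflect (fun l => (ξ⁻¹)^l) m
        rw [hrefl]
        rw [Finset.range_eq_Ico]
        refine le_trans (geom_sum_Ico_le_of_lt_one hinv0 hinv) ?_
        rw [pow_zero, one_div]

lemma T_lower {m : ℕ} (hm : 0 < m) {ξ : ℝ} (hξ : 0 < ξ) :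
    Real.exp ((m:ℝ) * (1 + Real.log ξ - ξ) - Real.log ξ - 1 - Real.log m)
      ≤ S m ((m:ℝ)*ξ) * Real.exp (-((m:ℝ)*ξ)) := by
  have hmR : (0:ℝ) < (m:ℝ) := by exact_mod_cast hm
  have hMξ : (0:ℝ) < (m:ℝ)*ξ := by positivity
  have h1 : ((m:ℝ)*ξ)^(m-1) / (Nat.factorial (m-1)) ≤ S m ((m:ℝ)*ξ) :=
    term_le_S (Nat.sub_lt hm one_pos) hMξ.le
  have h2 : ((Nat.factorial (m-1) : ℝ)) ≤ (m:ℝ)^m * Real.exp (1 - m) := pred_fact_ub hm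
  have hfpos : (0:ℝ) < (Nat.factorial (m-1) : ℝ) := by positivity
  have h3 : ((m:ℝ)*ξ)^(m-1) / ((m:ℝ)^m * Real.exp (1 - m))
      ≤ ((m:ℝ)*ξ)^(m-1) / (Nat.factorial (m-1)) :=
    div_le_div_of_nonneg_left (by positivity) hfpos h2
  have hkey : Real.exp ((m:ℝ) * (1 + Real.log ξ - ξ) - Real.log ξ - 1 - Real.log m)
      = ((m:ℝ)*ξ)^(m-1) / ((m:ℝ)^m * Real.exp (1 - m)) * Real.exp (-((m:ℝ)*ξ)) := by
    have hc : ((m-1 : ℕ) : ℝ) = (m:ℝ) - 1 := by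
      rw [Nat.cast_sub hm, Nat.cast_one]
    have e1 : ((m:ℝ)*ξ)^(m-1) = Real.exp (((m-1:ℕ):ℝ) * Real.log ((m:ℝ)*ξ)) := by
      rw [Real.exp_nat_mul, Real.exp_log hMξ]
    have e2 : (m:ℝ)^m = Real.exp ((m:ℝ) * Real.log m) := by
      rw [Real.exp_nat_mul, Real.exp_log hmR]
    have e3 : Real.log ((m:ℝ)*ξ) = Real.log m + Real.log ξ := Real.log_mul hmR.ne' hξ.ne'
    rw [e1, e2, e3, hc, ← Real.exp_add, ← Real.exp_sub, ← Real.exp_add]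
    congr 1
    ring
  rw [hkey]
  exact mul_le_mul_of_nonneg_right (h3.trans h1) (Real.exp_pos _).le

lemma T_upper {m : ℕ} (hm : 0 < m) {ξ : ℝ} (hξ : 1 < ξ) :
    S m ((m:ℝ)*ξ) * Real.exp (-((m:ℝ)*ξ))
      ≤ (1-ξ⁻¹)⁻¹ * Real.exp ((m:ℝ) * (1 + Real.log ξ - ξ) - Real.log ξ) := by
  have hξ0 : (0:ℝ) < ξ := by linarith
  have hmR : (0:ℝ) < (m:ℝ) := by exact_mod_cast hm
  have hMξ : (0:ℝ) < (m:ℝ)*ξ := by positivity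
  have hinvpos : (0:ℝ) < (1-ξ⁻¹)⁻¹ := by
    have : ξ⁻¹ < 1 := by rw [inv_lt_one_iff₀]; right; exact hξ
    have : (0:ℝ) < 1 - ξ⁻¹ := by linarith
    positivity
  have h1 := S_geom m hξ
  -- (mξ)^(m-1)/(m-1)! = m^m * ξ^(m-1) / m!
  have hfs : (m:ℝ) * (Nat.factorial (m-1) : ℝ) = (Nat.factorial m : ℝ) := by
    rw [← Nat.cast_mul, Nat.mul_factorial_pred hm.ne']
  have hfpos : (0:ℝ) < (Nat.factorial (m-1) : ℝ) := by positivity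
  have hFpos : (0:ℝ) < (Nat.factorial m : ℝ) := by positivity
  have hid : ((m:ℝ)*ξ)^(m-1) / (Nat.factorial (m-1))
      = (m:ℝ)^m * ξ^(m-1) / (Nat.factorial m) := by
    rw [← hfs, mul_pow]
    have hp : (m:ℝ)^m = (m:ℝ)^(m-1) * (m:ℝ) := by
      rw [← pow_succ, Nat.sub_add_cancel hm]
    rw [hp]
    field_simp
  have h2 : (m:ℝ)^m / (Nat.factorial m) ≤ Real.exp m := by
    rw [div_le_iff₀ hFpos]
    linarith [pow_le_fact_mul_exp m, mul_comm (Real.exp (m:ℝ)) ((Nat.factorial m : ℝ))]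
  have h3 : ((m:ℝ)*ξ)^(m-1) / (Nat.factorial (m-1)) ≤ Real.exp m * ξ^(m-1) := by
    rw [hid]
    have : (m:ℝ)^m * ξ^(m-1) / (Nat.factorial m) = ((m:ℝ)^m / (Nat.factorial m)) * ξ^(m-1) := by
      ring
    rw [this]
    exact mul_le_mul_of_nonneg_right h2 (by positivity)
  have hkey : Real.exp ((m:ℝ)*1) * ξ^(m-1) * Real.exp (-((m:ℝ)*ξ))
      = Real.exp ((m:ℝ) * (1 + Real.log ξ - ξ) - Real.log ξ) := by
    have hc : ((m-1 : ℕ) : ℝ) = (m:ℝ) - 1 := by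
      rw [Nat.cast_sub hm, Nat.cast_one]
    have e1 : ξ^(m-1) = Real.exp (((m-1:ℕ):ℝ) * Real.log ξ) := by
      rw [Real.exp_nat_mul, Real.exp_log hξ0]
    rw [e1, hc, ← Real.exp_add, ← Real.exp_add]
    congr 1
    ring
  calc S m ((m:ℝ)*ξ) * Real.exp (-((m:ℝ)*ξ))
      ≤ ((m:ℝ)*ξ)^(m-1) / (Nat.factorial (m-1)) * (1-ξ⁻¹)⁻¹ * Real.exp (-((m:ℝ)*ξ)) :=
        mul_le_mul_of_nonneg_right h1 (Real.exp_pos _).le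
    _ ≤ Real.exp m * ξ^(m-1) * (1-ξ⁻¹)⁻¹ * Real.exp (-((m:ℝ)*ξ)) := by
        apply mul_le_mul_of_nonneg_right _ (Real.exp_pos _).le
        exact mul_le_mul_of_nonneg_right h3 hinvpos.le
    _ = (1-ξ⁻¹)⁻¹ * (Real.exp ((m:ℝ)*1) * ξ^(m-1) * Real.exp (-((m:ℝ)*ξ))) := by
        rw [mul_one]; ring
    _ = (1-ξ⁻¹)⁻¹ * Real.exp ((m:ℝ) * (1 + Real.log ξ - ξ) - Real.log ξ) := by rw [hkey]

lemma T_nonneg (m : ℕ) {y : ℝ} (hy : 0 ≤ y) : 0 ≤ S m y * Real.exp (-y) :=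
  mul_nonneg (S_nonneg m hy) (Real.exp_pos _).le

lemma T_le_one (m : ℕ) {y : ℝ} (hy : 0 ≤ y) : S m y * Real.exp (-y) ≤ 1 := by
  have h := S_le_exp m hy
  have h2 : Real.exp y * Real.exp (-y) = 1 := by rw [← Real.exp_add]; simp
  nlinarith [Real.exp_pos (-y), Real.exp_pos y, h]

lemma bernoulli_bound {T : ℝ} (h1 : T ≤ 1) (n : ℕ) : 1 - (1 - T)^n ≤ (n:ℝ) * T := by
  have := one_add_mul_le_pow (a := -T) (by linarith) n
  have h2 : (1 : ℝ) + (n:ℝ) * (-T) = 1 - (n:ℝ)*T := by ring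
  rw [h2] at this
  have h3 : ((1:ℝ) + -T) = 1 - T := by ring
  rw [h3] at this
  linarith

lemma pow_le_exp_bound {T : ℝ} (h1 : T ≤ 1) (n : ℕ) :
    (1-T)^n ≤ Real.exp (-((n:ℝ)*T)) := by
  have h : (1 - T) ≤ Real.exp (-T) := by
    have := Real.add_one_le_exp (-T); linarith
  calc (1-T)^n ≤ (Real.exp (-T))^n := pow_le_pow_left₀ (by linarith) h n
    _ = Real.exp (-((n:ℝ)*T)) := by rw [← Real.exp_nat_mul]; ring_nf

lemma rpow_le_fact_exp {N : ℕ} {z ξ : ℝ} (hξ : 1 ≤ ξ) (hzN : z - 1 ≤ (N:ℝ)) :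
    ξ ^ (z - 1) ≤ (Nat.factorial N : ℝ) * Real.exp ξ := by
  have h1 : ξ ^ (z-1) ≤ ξ ^ ((N:ℕ):ℝ) := Real.rpow_le_rpow_of_exponent_le hξ hzN
  rw [Real.rpow_natCast] at h1
  have h2 : ξ^N / (Nat.factorial N : ℝ) ≤ S (N+1) ξ := term_le_S (Nat.lt_succ_self N) (by linarith)
  have h3 := S_le_exp (N+1) (y := ξ) (by linarith)
  have hf : (0:ℝ) < (Nat.factorial N : ℝ) := by positivity
  have := (h2.trans h3)
  rw [div_le_iff₀ hf] at this
  nlinarith [this, h1]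

lemma tail_pointwise {m n N : ℕ} (hm : 0 < m) (hn : 1 ≤ n) {c ξ z : ℝ} (hc : 1 < c)
    (hξ : c ≤ ξ) (hzN : z - 1 ≤ (N:ℝ)) (hM2 : 2 ≤ (m:ℝ) * (1 - 1/c)) :
    (1 - (1 - S m ((m:ℝ)*ξ) * Real.exp (-((m:ℝ)*ξ)))^n) * ξ ^ (z-1)
      ≤ ((1-c⁻¹)⁻¹ * (Nat.factorial N : ℝ) * Real.exp c)
          * Real.exp (Real.log n + (m:ℝ)*(1 + Real.log c - c)) * Real.exp (c - ξ) := by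
  have hξ1 : 1 < ξ := lt_of_lt_of_le hc hξ
  have hξ0 : (0:ℝ) < ξ := by linarith
  have hc0 : (0:ℝ) < c := by linarith
  have hMξ0 : (0:ℝ) ≤ (m:ℝ)*ξ := by positivity
  set T := S m ((m:ℝ)*ξ) * Real.exp (-((m:ℝ)*ξ)) with hT
  have hT1 : T ≤ 1 := T_le_one m hMξ0
  have hT0 : 0 ≤ T := T_nonneg m hMξ0
  have hrp : (0:ℝ) ≤ ξ ^ (z-1) := Real.rpow_nonneg hξ0.le _
  -- Step 1 : LHS ≤ n * T * ξ^(z-1)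
  have step1 : (1 - (1-T)^n) * ξ ^ (z-1) ≤ ((n:ℝ) * T) * ξ ^ (z-1) :=
    mul_le_mul_of_nonneg_right (bernoulli_bound hT1 n) hrp
  -- Step 2 : T ≤ (1-c⁻¹)⁻¹ * exp(m(1+log ξ-ξ) - log ξ)
  have hinvc : (0:ℝ) < 1 - c⁻¹ := by
    have : c⁻¹ < 1 := by rw [inv_lt_one_iff₀]; right; exact hc
    linarith
  have hinvξ : (0:ℝ) < 1 - ξ⁻¹ := by
    have : ξ⁻¹ < 1 := by rw [inv_lt_one_iff₀]; right; exact hξ1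
    linarith
  have hinvle : (1-ξ⁻¹)⁻¹ ≤ (1-c⁻¹)⁻¹ := by
    apply inv_anti₀ hinvc
    have : ξ⁻¹ ≤ c⁻¹ := by
      apply inv_anti₀ hc0 hξ
    linarith
  have step2 : T ≤ (1-c⁻¹)⁻¹ * Real.exp ((m:ℝ) * (1 + Real.log ξ - ξ) - Real.log ξ) := by
    refine (T_upper hm hξ1).trans ?_
    exact mul_le_mul_of_nonneg_right hinvle (Real.exp_pos _).le
  -- Step 3 : exp(m(1+log ξ-ξ)) ≤ exp(m(1+log c-c)) * exp (-(2*(ξ-c)))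
  have step3 : (m:ℝ) * (1 + Real.log ξ - ξ) ≤ (m:ℝ)*(1 + Real.log c - c) - 2*(ξ-c) := by
    have hlog : Real.log ξ - Real.log c ≤ (ξ - c)/c := by
      have h1 : Real.log (ξ/c) ≤ ξ/c - 1 := Real.log_le_sub_one_of_pos (by positivity)
      rw [Real.log_div hξ0.ne' hc0.ne'] at h1
      have : ξ/c - 1 = (ξ-c)/c := by field_simp
      linarith [h1, this.le, this.ge]
    have hm0 : (0:ℝ) ≤ (m:ℝ) := Nat.cast_nonneg m
    have key : (m:ℝ) * ((ξ - Real.log ξ) - (c - Real.log c)) ≥ 2*(ξ-c) := by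
      have h2 : (ξ - Real.log ξ) - (c - Real.log c) ≥ (1 - 1/c)*(ξ-c) := by
        have : (ξ - c)/c = (1/c)*(ξ-c) := by ring
        nlinarith [hlog]
      have h3 : (m:ℝ) * ((1-1/c)*(ξ-c)) ≥ 2*(ξ-c) := by
        have hξc : 0 ≤ ξ - c := by linarith
        nlinarith [hM2, hξc]
      nlinarith [mul_le_mul_of_nonneg_left h2 hm0]
    linarith [key]
  -- Step 4 : exp(-log ξ) ≤ 1
  have step4 : Real.exp (- Real.log ξ) ≤ 1 := by
    rw [Real.exp_neg, Real.exp_log hξ0]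
    rw [inv_le_one_iff₀]
    right; linarith
  -- Step 5 : ξ^(z-1) ≤ N! exp ξ
  have step5 : ξ ^ (z-1) ≤ (Nat.factorial N : ℝ) * Real.exp ξ := rpow_le_fact_exp hξ1.le hzN
  -- combine
  have hnR : (n:ℝ) = Real.exp (Real.log n) := by
    rw [Real.exp_log]; exact_mod_cast hn
  have expand : Real.exp ((m:ℝ) * (1 + Real.log ξ - ξ) - Real.log ξ)
      ≤ Real.exp ((m:ℝ)*(1 + Real.log c - c)) * Real.exp (-(2*(ξ-c))) * Real.exp (-Real.log ξ) := by
    rw [← Real.exp_add, ← Real.exp_add]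
    apply Real.exp_le_exp.2
    linarith [step3]
  calc (1 - (1-T)^n) * ξ ^ (z-1)
      ≤ ((n:ℝ) * T) * ξ ^ (z-1) := step1
    _ ≤ ((n:ℝ) * ((1-c⁻¹)⁻¹ * Real.exp ((m:ℝ) * (1 + Real.log ξ - ξ) - Real.log ξ)))
          * ((Nat.factorial N : ℝ) * Real.exp ξ) := by
        apply mul_le_mul
        · exact mul_le_mul_of_nonneg_left step2 (Nat.cast_nonneg n)
        · exact step5
        · exact hrp
        · positivity
    _ ≤ ((n:ℝ) * ((1-c⁻¹)⁻¹ * (Real.exp ((m:ℝ)*(1 + Real.log c - c)) * Real.exp (-(2*(ξ-c)))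
          * Real.exp (-Real.log ξ)))) * ((Nat.factorial N : ℝ) * Real.exp ξ) := by
        apply mul_le_mul_of_nonneg_right _ (by positivity)
        apply mul_le_mul_of_nonneg_left _ (Nat.cast_nonneg n)
        exact mul_le_mul_of_nonneg_left expand (by positivity)
    _ ≤ ((n:ℝ) * ((1-c⁻¹)⁻¹ * (Real.exp ((m:ℝ)*(1 + Real.log c - c)) * Real.exp (-(2*(ξ-c)))
          * 1))) * ((Nat.factorial N : ℝ) * Real.exp ξ) := by
        apply mul_le_mul_of_nonneg_right _ (by positivity)
        apply mul_le_mul_of_nonneg_left _ (Nat.cast_nonneg n)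
        apply mul_le_mul_of_nonneg_left _ (by positivity)
        apply mul_le_mul_of_nonneg_left step4 (by positivity)
    _ = ((1-c⁻¹)⁻¹ * (Nat.factorial N : ℝ) * Real.exp c)
          * Real.exp (Real.log n + (m:ℝ)*(1 + Real.log c - c)) * Real.exp (c - ξ) := by
        have hn0 : (0:ℝ) < (n:ℝ) := by exact_mod_cast hn
        have e : Real.exp (Real.log n + (m:ℝ)*(1 + Real.log c - c))
            = (n:ℝ) * Real.exp ((m:ℝ)*(1 + Real.log c - c)) := by
          rw [Real.exp_add, Real.exp_log hn0]
        have e2 : Real.exp (-(2*(ξ-c))) * Real.exp ξ = Real.exp c * Real.exp (c - ξ) := by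
          rw [← Real.exp_add, ← Real.exp_add]; congr 1; ring
        rw [mul_one, e]
        linear_combination ((1-c⁻¹)⁻¹ * (Nat.factorial N : ℝ) * (n:ℝ)
          * Real.exp ((m:ℝ)*(1 + Real.log c - c))) * e2

section helpers
variable (β : ℝ) (m : ℕ → ℕ)

lemma hL : Tendsto (fun n : ℕ => Real.log n) atTop atTop :=
  Real.tendsto_log_atTop.comp tendsto_natCast_atTop_atTop

lemma hLpos : ∀ᶠ n : ℕ in atTop, 0 < Real.log n :=
  (hL).eventually_gt_atTop 0

variable (hβ : 0 < β)
  (hcrit : Tendsto (fun n : ℕ => (m n : ℝ) / (β * Real.log n)) atTop (nhds 1))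

include hβ hcrit in
lemma hM : Tendsto (fun n : ℕ => (m n : ℝ)) atTop atTop := by
  have hβL : Tendsto (fun n : ℕ => β * Real.log n) atTop atTop :=
    Tendsto.const_mul_atTop hβ hL
  have hprod : Tendsto (fun n : ℕ => (m n : ℝ) / (β * Real.log n) * (β * Real.log n))
      atTop atTop := Tendsto.pos_mul_atTop one_pos hcrit hβL
  apply hprod.congr'
  filter_upwards [hLpos] with n hn
  field_simp

variable (hm : ∀ n, 0 < m n)

include hβ hcrit hm in
lemma hlogdiv : Tendsto (fun n : ℕ => Real.log (m n) / Real.log n) atTop (nhds 0) := by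
  have h2 : ∀ᶠ n : ℕ in atTop, (m n : ℝ) / (β * Real.log n) < 2 :=
    hcrit.eventually (gt_mem_nhds (by norm_num))
  have upper : Tendsto (fun n : ℕ => Real.log (2*β) * (Real.log n)⁻¹
      + Real.log (Real.log n) / Real.log n) atTop (nhds 0) := by
    have t1 : Tendsto (fun n : ℕ => Real.log (2*β) * (Real.log n)⁻¹) atTop (nhds 0) := by
      have := (tendsto_inv_atTop_zero).comp (hL)
      simpa using this.const_mul (Real.log (2*β))
    have t2 : Tendsto (fun n : ℕ => Real.log (Real.log n) / Real.log n) atTop (nhds 0) :=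
      (Real.isLittleO_log_id_atTop.tendsto_div_nhds_zero).comp (hL)
    simpa using t1.add t2
  apply squeeze_zero'
  · filter_upwards [hLpos] with n hn
    have h1 : (1:ℝ) ≤ (m n : ℝ) := by exact_mod_cast (hm n)
    positivity
  · filter_upwards [hLpos, h2] with n hn h2n
    have hβL : (0:ℝ) < β * Real.log n := by positivity
    have hMlt : (m n : ℝ) < 2 * (β * Real.log n) := by
      rw [div_lt_iff₀ hβL] at h2n; linarith
    have h1 : (1:ℝ) ≤ (m n : ℝ) := by exact_mod_cast (hm n)
    have hlog : Real.log (m n) ≤ Real.log (2*β) + Real.log (Real.log n) := by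
      calc Real.log (m n) ≤ Real.log (2 * β * Real.log n) :=
            Real.log_le_log (by linarith) (by linarith [hMlt])
        _ = Real.log (2*β) + Real.log (Real.log n) :=
            Real.log_mul (by positivity) hn.ne'
    rw [div_le_iff₀ hn]
    calc Real.log (m n) ≤ Real.log (2*β) + Real.log (Real.log n) := hlog
      _ = (Real.log (2*β) * (Real.log n)⁻¹ + Real.log (Real.log n) / Real.log n)
            * Real.log n := by field_simp
  · exact upper

include hβ hcrit hm in
lemma helper_div (u v w : ℝ) :
    Tendsto (fun n : ℕ => (Real.log n + (m n : ℝ) * u + v * Real.log (m n) + w) / Real.log n)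
      atTop (nhds (1 + β * u)) := by
  have hinvL : Tendsto (fun n : ℕ => (Real.log n)⁻¹) atTop (nhds 0) :=
    (tendsto_inv_atTop_zero).comp (hL)
  have main : Tendsto (fun n : ℕ =>
      1 + ((m n : ℝ) / (β * Real.log n)) * (β * u) + v * (Real.log (m n) / Real.log n)
        + w * (Real.log n)⁻¹) atTop (nhds (1 + 1 * (β * u) + v * 0 + w * 0)) := by
    exact (((tendsto_const_nhds).add (hcrit.mul_const (β*u))).add
      ((hlogdiv β m hβ hcrit hm).const_mul v)).add (hinvL.const_mul w)
  have : (1 + 1 * (β * u) + v * 0 + w * 0) = 1 + β * u := by ring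
  rw [this] at main
  apply main.congr'
  filter_upwards [hLpos] with n hn
  field_simp

include hβ hcrit hm in
lemma helper_top (u v w : ℝ) (h : 0 < 1 + β * u) :
    Tendsto (fun n : ℕ => Real.log n + (m n : ℝ) * u + v * Real.log (m n) + w) atTop atTop := by
  have := Tendsto.atTop_mul_pos h (hL) (helper_div β m hβ hcrit hm u v w)
  apply this.congr'
  filter_upwards [hLpos] with n hn
  field_simp

include hβ hcrit hm in
lemma helper_bot (u v w : ℝ) (h : 1 + β * u < 0) :
    Tendsto (fun n : ℕ => Real.log n + (m n : ℝ) * u + v * Real.log (m n) + w) atTop atBot := by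
  have := Tendsto.atTop_mul_neg h (hL) (helper_div β m hβ hcrit hm u v w)
  apply this.congr'
  filter_upwards [hLpos] with n hn
  field_simp

end helpers

lemma S_continuous (m : ℕ) : Continuous (S m) := by
  unfold S
  exact continuous_finset_sum _ fun l _ => (continuous_pow l).div_const _

/-- Critical case `m ∼ β ln n`: for every fixed `z > 0`,
`z ∫_0^∞ [1 − (1 − S_m(mξ)e^{−mξ})^n] ξ^{z−1} dξ → (α/β)^z`, where `α` is the unique solution of
`α − β ln α = β − β ln β + 1` in `(β, ∞)`; i.e. the `z`-th moment of the maximum of `n`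
independent Erlang(m, 1/n) random variables is asymptotically `α^z n^z (ln n)^z`. -/
theorem stmt3 (β : ℝ) (hβ : 0 < β) (m : ℕ → ℕ) (hm : ∀ n, 0 < m n)
    (hcrit : Tendsto (fun n : ℕ => (m n : ℝ) / (β * Real.log n)) atTop (nhds 1))
    (α : ℝ) (hαβ : β < α)
    (hα : α - β * Real.log α = β - β * Real.log β + 1)
    (z : ℝ) (hz : 0 < z) :
    Tendsto (fun n : ℕ =>
        z * ∫ ξ in Set.Ioi (0 : ℝ),
          (1 - (1 - S (m n) ((m n : ℝ) * ξ) * Real.exp (-((m n : ℝ) * ξ))) ^ n)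
            * ξ ^ (z - 1))
      atTop (nhds ((α / β) ^ z)) := by
  classical
  have hα0 : (0:ℝ) < α := lt_trans hβ hαβ
  set b : ℝ := α / β with hbdef
  have hb1 : 1 < b := (one_lt_div hβ).2 hαβ
  have hb0 : (0:ℝ) < b := lt_trans one_pos hb1
  set c : ℝ := b + 1 with hcdef
  have hbc : b < c := by simp [hcdef]
  have hc1 : 1 < c := by linarith
  have hc0 : (0:ℝ) < c := by linarith
  -- calibration : β * (b - 1 - log b) = 1
  have hcal : β * (b - 1 - Real.log b) = 1 := by
    have hlog : Real.log b = Real.log α - Real.log β := Real.log_div hα0.ne' hβ.ne'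
    rw [hlog]
    have hbval : β * b = α := by rw [hbdef]; field_simp
    nlinarith [hα, hbval]
  have hmono : ∀ x y : ℝ, 1 ≤ x → x < y → x - 1 - Real.log x < y - 1 - Real.log y := by
    intro x y hx hxy
    have hx0 : (0:ℝ) < x := by linarith
    have hy0 : (0:ℝ) < y := by linarith
    have h1 : Real.log (y/x) < y/x - 1 :=
      Real.log_lt_sub_one_of_pos (by positivity) (by
        intro h
        have : y = x := by field_simp at h; linarith
        linarith)
    rw [Real.log_div hy0.ne' hx0.ne'] at h1
    have h2 : y/x - 1 = (y-x)/x := by field_simp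
    have h3 : (y-x)/x ≤ y - x := by
      rw [div_le_iff₀ hx0]
      nlinarith
    nlinarith
  have hlt : ∀ ξ : ℝ, 1 ≤ ξ → ξ < b → 0 < 1 + β * (1 + Real.log ξ - ξ) := by
    intro ξ h1 h2
    rcases eq_or_lt_of_le h1 with h | h
    · rw [← h]; simp [Real.log_one]
    · have := hmono ξ b h1 h2
      nlinarith [hcal]
  have hgt : ∀ ξ : ℝ, b < ξ → 1 + β * (1 + Real.log ξ - ξ) < 0 := by
    intro ξ h
    have := hmono b ξ hb1.le h
    nlinarith [hcal]
  -- abbreviations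
  set T : ℕ → ℝ → ℝ := fun n ξ => S (m n) ((m n : ℝ) * ξ) * Real.exp (-((m n : ℝ) * ξ))
    with hTdef
  set g : ℕ → ℝ → ℝ := fun n ξ => (1 - (1 - T n ξ)^n) * ξ ^ (z-1) with hgdef
  have hT0 : ∀ n (ξ : ℝ), 0 ≤ ξ → 0 ≤ T n ξ := by
    intro n ξ h; exact T_nonneg _ (by positivity)
  have hT1 : ∀ n (ξ : ℝ), 0 ≤ ξ → T n ξ ≤ 1 := by
    intro n ξ h; exact T_le_one _ (by positivity)
  have hg0 : ∀ n (ξ : ℝ), 0 < ξ → 0 ≤ g n ξ := by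
    intro n ξ h
    apply mul_nonneg _ (Real.rpow_nonneg h.le _)
    have := pow_le_one₀ (by linarith [hT1 n ξ h.le] : (0:ℝ) ≤ 1 - T n ξ)
      (by linarith [hT0 n ξ h.le] : 1 - T n ξ ≤ 1) (n := n)
    linarith
  have hgle : ∀ n (ξ : ℝ), 0 < ξ → g n ξ ≤ ξ ^ (z-1) := by
    intro n ξ h
    have hpow : (0:ℝ) ≤ (1 - T n ξ)^n :=
      pow_nonneg (by linarith [hT1 n ξ h.le]) n
    calc g n ξ ≤ 1 * ξ ^ (z-1) := by
          apply mul_le_mul_of_nonneg_right _ (Real.rpow_nonneg h.le _)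
          linarith
      _ = ξ ^ (z-1) := one_mul _
  -- key growth results
  have K1 : ∀ ξ : ℝ, 1 ≤ ξ → ξ < b →
      Tendsto (fun n : ℕ => (n:ℝ) * T n ξ) atTop atTop := by
    intro ξ h1 hξb
    have hξ0 : (0:ℝ) < ξ := by linarith
    have htop := helper_top β m hβ hcrit hm (1 + Real.log ξ - ξ) (-1) (-Real.log ξ - 1)
      (hlt ξ h1 hξb)
    apply tendsto_atTop_mono' atTop _ (Real.tendsto_exp_atTop.comp htop)
    filter_upwards [eventually_ge_atTop 1] with n hn
    have hn0 : (0:ℝ) < (n:ℝ) := by exact_mod_cast hn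
    have hTlow := T_lower (hm n) hξ0
    have heq : Real.log n + (m n : ℝ) * (1 + Real.log ξ - ξ) + (-1) * Real.log (m n)
        + (-Real.log ξ - 1)
        = Real.log n + ((m n : ℝ) * (1 + Real.log ξ - ξ) - Real.log ξ - 1 - Real.log (m n)) := by
      ring
    show Real.exp (Real.log n + (m n : ℝ) * (1 + Real.log ξ - ξ) + (-1) * Real.log (m n)
        + (-Real.log ξ - 1)) ≤ (n:ℝ) * T n ξ
    rw [heq, Real.exp_add, Real.exp_log hn0]
    exact mul_le_mul_of_nonneg_left hTlow hn0.le
  have K2 : ∀ ξ : ℝ, b < ξ → Tendsto (fun n : ℕ => (n:ℝ) * T n ξ) atTop (nhds 0) := by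
    intro ξ hξb
    have hξ1 : 1 < ξ := hb1.trans hξb
    have hξ0 : (0:ℝ) < ξ := by linarith
    have hinv : (0:ℝ) < (1-ξ⁻¹)⁻¹ := by
      have : ξ⁻¹ < 1 := by rw [inv_lt_one_iff₀]; right; exact hξ1
      have h2 : (0:ℝ) < 1 - ξ⁻¹ := by linarith
      positivity
    have hbot := helper_bot β m hβ hcrit hm (1 + Real.log ξ - ξ) 0 (-Real.log ξ)
      (hgt ξ hξb)
    have hexp0 : Tendsto (fun n : ℕ => (1-ξ⁻¹)⁻¹ * Real.exp (Real.log n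
        + (m n : ℝ) * (1 + Real.log ξ - ξ) + 0 * Real.log (m n) + (-Real.log ξ)))
        atTop (nhds 0) := by
      have := (Real.tendsto_exp_atBot.comp hbot).const_mul ((1-ξ⁻¹)⁻¹)
      simpa using this
    apply squeeze_zero'
    · filter_upwards with n
      exact mul_nonneg (Nat.cast_nonneg n) (hT0 n ξ hξ0.le)
    · filter_upwards [eventually_ge_atTop 1] with n hn
      have hn0 : (0:ℝ) < (n:ℝ) := by exact_mod_cast hn
      have hTup := T_upper (hm n) hξ1
      have heq : Real.log n + (m n : ℝ) * (1 + Real.log ξ - ξ) + 0 * Real.log (m n)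
          + (-Real.log ξ)
          = Real.log n + ((m n : ℝ) * (1 + Real.log ξ - ξ) - Real.log ξ) := by ring
      show (n:ℝ) * T n ξ ≤ (1-ξ⁻¹)⁻¹ * Real.exp (Real.log n
          + (m n : ℝ) * (1 + Real.log ξ - ξ) + 0 * Real.log (m n) + (-Real.log ξ))
      rw [heq, Real.exp_add, Real.exp_log hn0]
      calc (n:ℝ) * T n ξ
          ≤ (n:ℝ) * ((1-ξ⁻¹)⁻¹ * Real.exp ((m n:ℝ) * (1 + Real.log ξ - ξ) - Real.log ξ)) :=
            mul_le_mul_of_nonneg_left hTup hn0.le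
        _ = (1-ξ⁻¹)⁻¹ * ((n:ℝ) * Real.exp ((m n:ℝ) * (1 + Real.log ξ - ξ) - Real.log ξ)) := by
            ring
    · exact hexp0
  -- pointwise limits
  have P1 : ∀ ξ : ℝ, 0 < ξ → ξ < b →
      Tendsto (fun n : ℕ => (1 - T n ξ)^n) atTop (nhds 0) := by
    have P1' : ∀ ξ : ℝ, 1 ≤ ξ → ξ < b →
        Tendsto (fun n : ℕ => (1 - T n ξ)^n) atTop (nhds 0) := by
      intro ξ h1 hξb
      have hξ0 : (0:ℝ) < ξ := by linarith
      apply squeeze_zero'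
      · filter_upwards with n
        exact pow_nonneg (by linarith [hT1 n ξ hξ0.le]) n
      · filter_upwards with n
        exact pow_le_exp_bound (hT1 n ξ hξ0.le) n
      · exact Real.tendsto_exp_neg_atTop_nhds_zero.comp (K1 ξ h1 hξb)
    intro ξ hξ0 hξb
    by_cases h1 : 1 ≤ ξ
    · exact P1' ξ h1 hξb
    · push_neg at h1
      apply squeeze_zero'
      · filter_upwards with n
        exact pow_nonneg (by linarith [hT1 n ξ hξ0.le]) n
      · filter_upwards with n
        have hmono' : T n 1 ≤ T n ξ := by
          have hM0 : (0:ℝ) ≤ (m n : ℝ) := Nat.cast_nonneg _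
          have := T_antitoneOn (hm n) (a := (m n : ℝ) * ξ) (b := (m n : ℝ) * 1)
            (Set.mem_Ici.2 (by positivity)) (Set.mem_Ici.2 (by positivity))
            (by apply mul_le_mul_of_nonneg_left _ hM0; linarith)
          exact this
        show (1 - T n ξ)^n ≤ (1 - T n 1)^n
        apply pow_le_pow_left₀ (by linarith [hT1 n ξ hξ0.le])
        linarith
      · exact P1' 1 le_rfl hb1
  have P2 : ∀ ξ : ℝ, b < ξ →
      Tendsto (fun n : ℕ => (1 - T n ξ)^n) atTop (nhds 1) := by
    intro ξ hξb
    have hξ0 : (0:ℝ) < ξ := by linarith [hb1.trans hξb]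
    have hlow : Tendsto (fun n : ℕ => 1 - (n:ℝ) * T n ξ) atTop (nhds 1) := by
      have := (K2 ξ hξb).const_sub 1
      simpa using this
    apply tendsto_of_tendsto_of_tendsto_of_le_of_le hlow tendsto_const_nhds
    · intro n
      show 1 - (n:ℝ) * T n ξ ≤ (1 - T n ξ)^n
      have := bernoulli_bound (hT1 n ξ hξ0.le) n
      linarith
    · intro n
      exact pow_le_one₀ (by linarith [hT1 n ξ hξ0.le]) (by linarith [hT0 n ξ hξ0.le])
  -- measurability
  have hrpowCM : ∀ s : Set ℝ, (∀ x ∈ s, x ≠ (0:ℝ)) → MeasurableSet s →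
      ∀ n : ℕ, AEStronglyMeasurable (g n) (volume.restrict s) := by
    intro s hs hsm n
    apply ContinuousOn.aestronglyMeasurable _ hsm
    apply ContinuousOn.mul
    · apply Continuous.continuousOn
      apply Continuous.sub continuous_const
      apply Continuous.pow
      apply Continuous.sub continuous_const
      exact ((S_continuous (m n)).comp (continuous_const.mul continuous_id)).mul
        (Real.continuous_exp.comp (continuous_const.mul continuous_id).neg)
    · intro x hx
      exact (Real.continuousAt_rpow_const x (z-1) (Or.inl (hs x hx))).continuousWithinAt
  have hIocne : ∀ x ∈ Ioc (0:ℝ) c, x ≠ 0 := fun x hx => (ne_of_gt hx.1)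
  have hIoine : ∀ x ∈ Ioi c, x ≠ (0:ℝ) := fun x hx => ne_of_gt (lt_trans hc0 hx)
  have hIoi0ne : ∀ x ∈ Ioi (0:ℝ), x ≠ (0:ℝ) := fun x hx => ne_of_gt hx
  -- bound integrable on Ioc 0 c
  have intc : IntegrableOn (fun ξ : ℝ => ξ ^ (z-1)) (Ioc 0 c) volume :=
    (intervalIntegral.intervalIntegrable_rpow' (by linarith : (-1:ℝ) < z-1) (a := 0) (b := c)).1
  -- exp bound integrable on Ioi c
  have hexpfun : (fun ξ : ℝ => Real.exp (c - ξ)) = (fun ξ : ℝ => Real.exp c * Real.exp (-1*ξ)) := by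
    funext ξ
    rw [← Real.exp_add]
    ring_nf
  have intexp : IntegrableOn (fun ξ : ℝ => Real.exp (c - ξ)) (Ioi c) volume := by
    rw [hexpfun]
    exact (exp_neg_integrableOn_Ioi c one_pos).const_mul _
  have hexpint : (∫ ξ in Ioi c, Real.exp (c - ξ)) = 1 := by
    rw [hexpfun]
    rw [integral_const_mul]
    have h1 : (∫ ξ in Ioi c, Real.exp (-1*ξ)) = Real.exp (-c) := by
      have : (fun ξ : ℝ => Real.exp (-1*ξ)) = fun ξ : ℝ => Real.exp (-ξ) := by
        funext ξ; ring_nf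
      rw [this, integral_exp_neg_Ioi]
    rw [h1, ← Real.exp_add]
    simp
  -- integrability of g n on Ioc 0 c
  have hint1 : ∀ n, IntegrableOn (g n) (Ioc 0 c) volume := by
    intro n
    apply Integrable.mono' intc (hrpowCM _ hIocne measurableSet_Ioc n)
    rw [ae_restrict_iff' measurableSet_Ioc]
    filter_upwards with ξ hξ
    rw [Real.norm_eq_abs, abs_of_nonneg (hg0 n ξ hξ.1)]
    exact hgle n ξ hξ.1
  -- tail bound
  set N : ℕ := ⌈z⌉₊ with hNdef
  have hzN : z - 1 ≤ (N:ℝ) := by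
    have := Nat.le_ceil z
    linarith
  set D : ℕ → ℝ := fun n => ((1-c⁻¹)⁻¹ * (Nat.factorial N : ℝ) * Real.exp c)
      * Real.exp (Real.log n + (m n : ℝ)*(1 + Real.log c - c)) with hDdef
  have hMev2 : ∀ᶠ n : ℕ in atTop, 2 ≤ (m n : ℝ) * (1 - 1/c) := by
    have h1c : (0:ℝ) < 1 - 1/c := by
      have : 1/c < 1 := by rw [div_lt_one hc0]; exact hc1
      linarith
    exact ((hM β m hβ hcrit).atTop_mul_const h1c).eventually_ge_atTop 2
  have hDbound : ∀ᶠ n : ℕ in atTop, ∀ ξ ∈ Ioi c, g n ξ ≤ D n * Real.exp (c - ξ) := by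
    filter_upwards [eventually_ge_atTop 1, hMev2] with n hn h2n
    intro ξ hξ
    have := tail_pointwise (hm n) hn hc1 (le_of_lt hξ) hzN h2n
    calc g n ξ ≤ ((1-c⁻¹)⁻¹ * (Nat.factorial N : ℝ) * Real.exp c)
          * Real.exp (Real.log n + (m n:ℝ)*(1 + Real.log c - c)) * Real.exp (c - ξ) := this
      _ = D n * Real.exp (c - ξ) := by rw [hDdef]
  have hD0 : Tendsto D atTop (nhds 0) := by
    have hbot := helper_bot β m hβ hcrit hm (1 + Real.log c - c) 0 0 (hgt c hbc)
    have hbot' : Tendsto (fun n : ℕ => Real.log n + (m n : ℝ)*(1 + Real.log c - c))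
        atTop atBot := by
      apply hbot.congr
      intro n
      ring
    have hexp := Real.tendsto_exp_atBot.comp hbot'
    have := hexp.const_mul ((1-c⁻¹)⁻¹ * (Nat.factorial N : ℝ) * Real.exp c)
    simpa [hDdef] using this
  -- integrability of g n on Ioi c
  have hint2 : ∀ᶠ n : ℕ in atTop, IntegrableOn (g n) (Ioi c) volume := by
    filter_upwards [hDbound] with n hbnd
    apply Integrable.mono' (intexp.const_mul (D n)) (hrpowCM _ hIoine measurableSet_Ioi n)
    rw [ae_restrict_iff' measurableSet_Ioi]
    filter_upwards with ξ hξ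
    rw [Real.norm_eq_abs, abs_of_nonneg (hg0 n ξ (lt_trans hc0 hξ))]
    exact hbnd ξ hξ
  -- split
  have hsplit : ∀ᶠ n : ℕ in atTop, (∫ ξ in Ioi (0:ℝ), g n ξ)
      = (∫ ξ in Ioc (0:ℝ) c, g n ξ) + ∫ ξ in Ioi c, g n ξ := by
    filter_upwards [hint2] with n h2
    rw [← Set.Ioc_union_Ioi_eq_Ioi hc0.le]
    exact setIntegral_union (Set.Ioc_disjoint_Ioi le_rfl) measurableSet_Ioi (hint1 n) h2
  -- DCT on Ioc 0 c
  set f : ℝ → ℝ := (Ioc (0:ℝ) b).indicator (fun ξ => ξ ^ (z-1)) with hfdef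
  have hDCT : Tendsto (fun n => ∫ ξ in Ioc (0:ℝ) c, g n ξ) atTop
      (nhds (∫ ξ in Ioc (0:ℝ) c, f ξ)) := by
    apply tendsto_integral_of_dominated_convergence (fun ξ => ξ ^ (z-1))
      (fun n => hrpowCM _ hIocne measurableSet_Ioc n) intc
    · intro n
      rw [ae_restrict_iff' measurableSet_Ioc]
      filter_upwards with ξ hξ
      rw [Real.norm_eq_abs, abs_of_nonneg (hg0 n ξ hξ.1)]
      exact hgle n ξ hξ.1
    · have hbne : ∀ᵐ ξ : ℝ ∂(volume.restrict (Ioc (0:ℝ) c)), ξ ≠ b := by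
        apply ae_restrict_of_ae
        rw [ae_iff]
        have : {ξ : ℝ | ¬ ξ ≠ b} = {b} := by
          ext x; simp
        rw [this]
        exact measure_singleton b
      filter_upwards [ae_restrict_mem measurableSet_Ioc, hbne] with ξ hmem hne
      rcases hne.lt_or_gt with hltb | hgtb
      · have hfx : f ξ = ξ ^ (z-1) := by
          rw [hfdef]
          exact indicator_of_mem (show ξ ∈ Ioc (0:ℝ) b from ⟨hmem.1, hltb.le⟩) _
        rw [hfx]
        have := ((tendsto_const_nhds : Tendsto (fun _ : ℕ => (1:ℝ)) atTop (nhds 1)).sub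
          (P1 ξ hmem.1 hltb)).mul_const (ξ ^ (z-1))
        simpa [hgdef] using this
      · have hfx : f ξ = 0 := by
          rw [hfdef]
          exact indicator_of_notMem (fun hmem' => absurd hmem'.2 (not_le.2 hgtb)) _
        rw [hfx]
        have := ((tendsto_const_nhds : Tendsto (fun _ : ℕ => (1:ℝ)) atTop (nhds 1)).sub
          (P2 ξ hgtb)).mul_const (ξ ^ (z-1))
        simpa [hgdef] using this
  have hfval : (∫ ξ in Ioc (0:ℝ) c, f ξ) = b ^ z / z := by
    rw [hfdef, setIntegral_indicator measurableSet_Ioc]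
    have hinter : Ioc (0:ℝ) c ∩ Ioc (0:ℝ) b = Ioc (0:ℝ) b := by
      rw [Set.Ioc_inter_Ioc]
      simp [min_eq_right hbc.le]
    rw [hinter, ← intervalIntegral.integral_of_le hb0.le,
      integral_rpow (Or.inl (by linarith : (-1:ℝ) < z-1))]
    rw [show z - 1 + 1 = z by ring, Real.zero_rpow hz.ne']
    ring
  -- tail tendsto 0
  have hTail : Tendsto (fun n => ∫ ξ in Ioi c, g n ξ) atTop (nhds 0) := by
    apply squeeze_zero'
    · filter_upwards with n
      exact setIntegral_nonneg measurableSet_Ioi (fun ξ hξ => hg0 n ξ (lt_trans hc0 hξ))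
    · show ∀ᶠ n : ℕ in atTop, (∫ ξ in Ioi c, g n ξ) ≤ D n
      filter_upwards [hDbound, hint2] with n hbnd h2
      calc (∫ ξ in Ioi c, g n ξ) ≤ ∫ ξ in Ioi c, D n * Real.exp (c - ξ) :=
            setIntegral_mono_on h2 (intexp.const_mul (D n)) measurableSet_Ioi
              (fun ξ hξ => hbnd ξ hξ)
        _ = D n * ∫ ξ in Ioi c, Real.exp (c - ξ) := integral_const_mul _ _
        _ = D n := by rw [hexpint, mul_one]
    · exact hD0
  -- combine
  have hsum : Tendsto (fun n => z * ((∫ ξ in Ioc (0:ℝ) c, g n ξ) + ∫ ξ in Ioi c, g n ξ))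
      atTop (nhds (z * (b ^ z / z + 0))) := (hDCT.add hTail).const_mul z |>.congr
    (fun n => rfl) |>.mono_right (by rw [hfval])
  have hval : z * (b ^ z / z + 0) = b ^ z := by field_simp; ring
  rw [hval] at hsum
  have : Tendsto (fun n => z * ∫ ξ in Ioi (0:ℝ), g n ξ) atTop (nhds (b ^ z)) := by
    apply hsum.congr'
    filter_upwards [hsplit] with n h
    rw [h]
  exact this
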